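/- (AdaGrad-Norm regret bound.) Let X ⊆ ℝ^d be a nonempty compact convex set whose diameter is at most D, let x* ∈ X, let η > 0, and let g^(1), …, g^(T) ∈ ℝ^d. Set A_t = √(∑_{s=1}^t ‖g^(s)‖²), take x^(1) ∈ X, and define the iterates x^(t+1) = Π_X( x^(t) − η A_t⁻¹ g^(t) ) for 1 ≤ t ≤ T, where Π_X is the Euclidean metric projection onto X and A_t⁻¹ uses the convention 0⁻¹ = 0. Then ∑_{t=1}^T ⟨g^(t), x^(t) − x*⟩ ≤ (η + D²/(2η)) √(∑_{t=1}^T ‖g^(t)‖²). -/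

import Mathlib

/-- Key scalar inequality for the adaptive step-size sum. -/
lemma adagrad_aux1 (S c : ℝ) (hS : 0 ≤ S) (hc : 0 ≤ c) :
    2 * Real.sqrt S + c * (Real.sqrt (S + c))⁻¹ ≤ 2 * Real.sqrt (S + c) := by
  rcases eq_or_lt_of_le (by positivity : (0:ℝ) ≤ S + c) with h | h
  · have hS0 : S = 0 := by linarith
    have hc0 : c = 0 := by linarith
    simp [hS0, hc0]
  · set u := Real.sqrt S with hu_def
    set v := Real.sqrt (S + c) with hv_def
    have hv : 0 < v := Real.sqrt_pos.mpr h
    have hu : 0 ≤ u := Real.sqrt_nonneg _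
    have hu2 : u ^ 2 = S := Real.sq_sqrt hS
    have hv2 : v ^ 2 = S + c := Real.sq_sqrt h.le
    have huv : u ≤ v := Real.sqrt_le_sqrt (by linarith)
    have hcv : c = v ^ 2 - u ^ 2 := by rw [hu2, hv2]; ring
    have key : 2 * v - (2 * u + c * v⁻¹) = (v - u) ^ 2 * v⁻¹ := by
      rw [hcv]; field_simp; ring
    have : 0 ≤ (v - u) ^ 2 * v⁻¹ :=
      mul_nonneg (sq_nonneg _) (inv_nonneg.mpr hv.le)
    linarith

theorem stmt_13 (d T : ℕ) (hT : 1 ≤ T) (D η : ℝ) (hη : 0 < η)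
    (X : Set (EuclideanSpace ℝ (Fin d))) (hXne : X.Nonempty)
    (hXcomp : IsCompact X) (hXconv : Convex ℝ X)
    (hdiam : ∀ x ∈ X, ∀ y ∈ X, ‖x - y‖ ≤ D)
    (xstar : EuclideanSpace ℝ (Fin d)) (hxstar : xstar ∈ X)
    (g : ℕ → EuclideanSpace ℝ (Fin d))
    (A : ℕ → ℝ) (hA : ∀ t, A t = Real.sqrt (∑ s ∈ Finset.Icc 1 t, ‖g s‖ ^ 2))
    (x : ℕ → EuclideanSpace ℝ (Fin d)) (hx1 : x 1 ∈ X)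
    (hproj : ∀ t ∈ Finset.Icc 1 T, x (t + 1) ∈ X ∧
        ∀ y ∈ X, ‖x (t + 1) - (x t - (η * (A t)⁻¹) • g t)‖
          ≤ ‖y - (x t - (η * (A t)⁻¹) • g t)‖) :
    ∑ t ∈ Finset.Icc 1 T, (inner ℝ (g t) (x t - xstar) : ℝ)
      ≤ (η + D ^ 2 / (2 * η)) * Real.sqrt (∑ t ∈ Finset.Icc 1 T, ‖g t‖ ^ 2) := by
  haveI : Nonempty X := hXne.to_subtype
  set a : ℕ → ℝ := fun t => ‖g t‖ ^ 2 with ha_def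
  set r : ℕ → ℝ := fun t => ‖x t - xstar‖ ^ 2 with hr_def
  have ha_nonneg : ∀ t, 0 ≤ a t := fun t => sq_nonneg _
  have hr_nonneg : ∀ t, 0 ≤ r t := fun t => sq_nonneg _
  have hD0 : 0 ≤ D := le_trans (norm_nonneg _) (hdiam xstar hxstar xstar hxstar)
  have hA_nonneg : ∀ t, 0 ≤ A t := fun t => (hA t) ▸ Real.sqrt_nonneg _
  have hAmono : ∀ s t : ℕ, s ≤ t → A s ≤ A t := by
    intro s t hst
    rw [hA s, hA t]
    apply Real.sqrt_le_sqrt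
    apply Finset.sum_le_sum_of_subset_of_nonneg
      (Finset.Icc_subset_Icc_right hst)
    intro i _ _; positivity
  -- membership of iterates in X
  have hmem : ∀ t, 1 ≤ t → t ≤ T + 1 → x t ∈ X := by
    intro t
    induction t with
    | zero => intro h; omega
    | succ n _ =>
      intro _ hn
      rcases Nat.eq_zero_or_pos n with hn0 | hn0
      · subst hn0; exact hx1
      · exact (hproj n (Finset.mem_Icc.mpr ⟨hn0, by omega⟩)).1
  have hrD : ∀ t, 1 ≤ t → t ≤ T + 1 → r t ≤ D ^ 2 := by
    intro t h1 h2
    exact pow_le_pow_left₀ (norm_nonneg _) (hdiam _ (hmem t h1 h2) _ hxstar) 2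
  -- per-step inequality
  have hstep : ∀ t ∈ Finset.Icc 1 T,
      (inner ℝ (g t) (x t - xstar) : ℝ)
        ≤ A t / (2 * η) * (r t - r (t + 1)) + η / 2 * (a t * (A t)⁻¹) := by
    intro t ht
    obtain ⟨ht1, ht2⟩ := Finset.mem_Icc.mp ht
    obtain ⟨hmem', hmin⟩ := hproj t ht
    rcases eq_or_lt_of_le (hA_nonneg t) with hAt0 | hAt
    · -- A t = 0 : then g t = 0
      have hSt : ∑ s ∈ Finset.Icc 1 t, ‖g s‖ ^ 2 = 0 := by
        have h1 : Real.sqrt (∑ s ∈ Finset.Icc 1 t, ‖g s‖ ^ 2) = 0 := by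
          rw [← hA t]; exact hAt0.symm
        have h2 : 0 ≤ ∑ s ∈ Finset.Icc 1 t, ‖g s‖ ^ 2 :=
          Finset.sum_nonneg fun i _ => sq_nonneg _
        nlinarith [Real.sq_sqrt h2, h1]
      have hgt : g t = 0 := by
        have := (Finset.sum_eq_zero_iff_of_nonneg
          (fun i _ => sq_nonneg ‖g i‖)).mp hSt t (Finset.mem_Icc.mpr ⟨ht1, le_refl t⟩)
        simpa [pow_eq_zero_iff, norm_eq_zero] using this
      rw [hgt]
      simp [← hAt0, ha_def, hgt]
    · -- A t > 0
      set s : ℝ := η * (A t)⁻¹ with hs_def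
      have hs_pos : 0 < s := by positivity
      set z : EuclideanSpace ℝ (Fin d) := x t - s • g t with hz_def
      -- projection characterization
      have hinf : ‖z - x (t + 1)‖ = ⨅ w : X, ‖z - w‖ := by
        apply le_antisymm
        · apply le_ciInf
          intro w
          rw [norm_sub_rev, norm_sub_rev z]
          exact hmin w w.2
        · have hbdd : BddBelow (Set.range fun w : X => ‖z - ↑w‖) := by
            refine ⟨0, ?_⟩
            rintro b ⟨w, rfl⟩
            exact norm_nonneg _
          exact ciInf_le hbdd ⟨x (t + 1), hmem'⟩
      have hobt : (inner ℝ (z - x (t + 1)) (xstar - x (t + 1)) : ℝ) ≤ 0 :=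
        (norm_eq_iInf_iff_real_inner_le_zero hXconv hmem').mp hinf xstar hxstar
      have hkey : ‖x (t + 1) - xstar‖ ^ 2 ≤ ‖z - xstar‖ ^ 2 := by
        have h1 : z - xstar = (z - x (t + 1)) - (xstar - x (t + 1)) := by abel
        have h2 : ‖z - xstar‖ ^ 2 = ‖z - x (t + 1)‖ ^ 2
            - 2 * (inner ℝ (z - x (t + 1)) (xstar - x (t + 1)) : ℝ)
            + ‖xstar - x (t + 1)‖ ^ 2 := by
          rw [h1, norm_sub_sq_real]
        have h3 : ‖x (t + 1) - xstar‖ = ‖xstar - x (t + 1)‖ := norm_sub_rev _ _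
        have h4 : ‖x (t + 1) - xstar‖ ^ 2 = ‖xstar - x (t + 1)‖ ^ 2 := by rw [h3]
        nlinarith [sq_nonneg ‖z - x (t + 1)‖]
      -- expand the squared norm
      have hexp : ‖z - xstar‖ ^ 2
          = r t - 2 * s * (inner ℝ (g t) (x t - xstar) : ℝ) + s ^ 2 * a t := by
        have h1 : z - xstar = (x t - xstar) - s • g t := by
          rw [hz_def]; abel
        rw [h1, norm_sub_sq_real, real_inner_smul_right, norm_smul]
        have : (inner ℝ (x t - xstar) (g t) : ℝ) = (inner ℝ (g t) (x t - xstar) : ℝ) :=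
          real_inner_comm _ _
        rw [this]
        simp only [Real.norm_eq_abs, mul_pow, sq_abs]
        ring
      have hineq : r (t + 1) ≤ r t - 2 * s * (inner ℝ (g t) (x t - xstar) : ℝ)
          + s ^ 2 * a t := by
        rw [← hexp]; exact hkey
      -- divide by 2s
      have hb : (inner ℝ (g t) (x t - xstar) : ℝ)
          ≤ (r t - r (t + 1) + s ^ 2 * a t) / (2 * s) := by
        rw [le_div_iff₀ (by positivity)]
        nlinarith [hineq]
      refine hb.trans (le_of_eq ?_)
      have hAne : A t ≠ 0 := ne_of_gt hAt
      rw [hs_def]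
      field_simp
  -- Abel summation bound
  have habel : ∀ n, n ≤ T →
      ∑ t ∈ Finset.Icc 1 n, A t * (r t - r (t + 1)) ≤ A n * (D ^ 2 - r (n + 1)) := by
    intro n
    induction n with
    | zero =>
      intro _
      have : A 0 = 0 := by simp [hA 0]
      simp [this]
    | succ n ih =>
      intro hn
      have ihn := ih (by omega)
      rw [Finset.sum_Icc_succ_top (Nat.succ_le_succ (Nat.zero_le n))]
      have hmonoA := hAmono n (n + 1) (Nat.le_succ n)
      have hrd : r (n + 1) ≤ D ^ 2 := hrD (n + 1) (Nat.succ_le_succ (Nat.zero_le n)) (by omega)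
      nlinarith [hr_nonneg (n + 1), hA_nonneg n, hA_nonneg (n + 1)]
  -- step-size sum bound
  have hsum2 : ∀ n, ∑ t ∈ Finset.Icc 1 n, a t * (A t)⁻¹ ≤ 2 * A n := by
    intro n
    induction n with
    | zero => simp [hA 0]
    | succ n ih =>
      rw [Finset.sum_Icc_succ_top (Nat.succ_le_succ (Nat.zero_le n))]
      have hS : 0 ≤ ∑ s ∈ Finset.Icc 1 n, ‖g s‖ ^ 2 :=
        Finset.sum_nonneg fun i _ => sq_nonneg _
      have hrec : A (n + 1)
          = Real.sqrt ((∑ s ∈ Finset.Icc 1 n, ‖g s‖ ^ 2) + a (n + 1)) := by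
        rw [hA (n + 1), Finset.sum_Icc_succ_top (Nat.succ_le_succ (Nat.zero_le n))]
      calc (∑ t ∈ Finset.Icc 1 n, a t * (A t)⁻¹) + a (n + 1) * (A (n + 1))⁻¹
          ≤ 2 * A n + a (n + 1) * (A (n + 1))⁻¹ := by linarith
        _ ≤ 2 * A (n + 1) := by
            rw [hA n, hrec]
            exact adagrad_aux1 _ _ hS (ha_nonneg (n + 1))
  -- combine
  have hsum : ∑ t ∈ Finset.Icc 1 T, (inner ℝ (g t) (x t - xstar) : ℝ)
      ≤ (2 * η)⁻¹ * ∑ t ∈ Finset.Icc 1 T, A t * (r t - r (t + 1))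
        + η / 2 * ∑ t ∈ Finset.Icc 1 T, a t * (A t)⁻¹ := by
    calc ∑ t ∈ Finset.Icc 1 T, (inner ℝ (g t) (x t - xstar) : ℝ)
        ≤ ∑ t ∈ Finset.Icc 1 T,
            (A t / (2 * η) * (r t - r (t + 1)) + η / 2 * (a t * (A t)⁻¹)) :=
          Finset.sum_le_sum hstep
      _ = (2 * η)⁻¹ * ∑ t ∈ Finset.Icc 1 T, A t * (r t - r (t + 1))
            + η / 2 * ∑ t ∈ Finset.Icc 1 T, a t * (A t)⁻¹ := by
          rw [Finset.sum_add_distrib, Finset.mul_sum, Finset.mul_sum]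
          congr 1
          · apply Finset.sum_congr rfl; intro i _; ring
  have h1 : ∑ t ∈ Finset.Icc 1 T, A t * (r t - r (t + 1)) ≤ A T * D ^ 2 := by
    have := habel T le_rfl
    nlinarith [hr_nonneg (T + 1), hA_nonneg T]
  have h2 := hsum2 T
  have hfin : (2 * η)⁻¹ * (A T * D ^ 2) + η / 2 * (2 * A T)
      = (η + D ^ 2 / (2 * η)) * A T := by
    field_simp
    ring
  calc ∑ t ∈ Finset.Icc 1 T, (inner ℝ (g t) (x t - xstar) : ℝ)
      ≤ (2 * η)⁻¹ * ∑ t ∈ Finset.Icc 1 T, A t * (r t - r (t + 1))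
        + η / 2 * ∑ t ∈ Finset.Icc 1 T, a t * (A t)⁻¹ := hsum
    _ ≤ (2 * η)⁻¹ * (A T * D ^ 2) + η / 2 * (2 * A T) := by
        have e1 : (0:ℝ) < (2 * η)⁻¹ := by positivity
        have e2 : (0:ℝ) < η / 2 := by positivity
        nlinarith
    _ = (η + D ^ 2 / (2 * η)) * A T := hfin
    _ = (η + D ^ 2 / (2 * η)) * Real.sqrt (∑ t ∈ Finset.Icc 1 T, ‖g t‖ ^ 2) := by
        rw [hA T]
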